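/- Let K* = max{ D(P2||P1)/D*, D(P1||P2)/D* }. For every γ ≤ D* and every K ≥ K*, the two-phase hypothesis test run with Phase-II threshold α = 0 (i.e., λ = λ*) achieves every error-exponent pair on the boundary of the region R_γ; in particular R_γ ⊆ R_AFL^(γ,K) for all K ≥ K*. -/

import Mathlib

open Real Finset
open scoped Classical

noncomputable section

variable {X : Type} [Fintype X]

/-- `p` is a probability mass function on the finite alphabet `X`. -/
def IsPMF (p : X → ℝ) : Prop := (∀ x, 0 ≤ p x) ∧ ∑ x, p x = 1

/-- Kullback–Leibler divergence (natural logarithms) between distributions on a finite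
alphabet, with the convention `0 · log(0/·) = 0`. -/
def klDiv (p q : X → ℝ) : ℝ := ∑ x, p x * Real.log (p x / q x)

/-- The `λ`-tilted distribution between `P1` and `P2`. -/
def tilted (P1 P2 : X → ℝ) (lam : ℝ) (x : X) : ℝ :=
  P1 x ^ (1 - lam) * P2 x ^ lam / ∑ a, P1 a ^ (1 - lam) * P2 a ^ lam

/-- The fixed-length error-exponent region
`R_FL = {(E1,E2) : ∃ λ ∈ [0,1], E1 ≤ D(P^(λ)‖P1) ∧ E2 ≤ D(P^(λ)‖P2)}`. -/
def RFL (P1 P2 : X → ℝ) : Set (ℝ × ℝ) :=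
  { E | ∃ lam ∈ Set.Icc (0:ℝ) 1,
      E.1 ≤ klDiv (tilted P1 P2 lam) P1 ∧ E.2 ≤ klDiv (tilted P1 P2 lam) P2 }

/-- `E1(γ) = max { D(P^(λ)‖P1) : λ ∈ [0,1], D(P^(λ)‖P2) ≥ γ }`. -/
def E1exp (P1 P2 : X → ℝ) (γ : ℝ) : ℝ :=
  sSup { e | ∃ lam ∈ Set.Icc (0:ℝ) 1,
      γ ≤ klDiv (tilted P1 P2 lam) P2 ∧ e = klDiv (tilted P1 P2 lam) P1 }

/-- `E2(γ) = max { D(P^(λ)‖P2) : λ ∈ [0,1], D(P^(λ)‖P1) ≥ γ }`. -/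
def E2exp (P1 P2 : X → ℝ) (γ : ℝ) : ℝ :=
  sSup { e | ∃ lam ∈ Set.Icc (0:ℝ) 1,
      γ ≤ klDiv (tilted P1 P2 lam) P1 ∧ e = klDiv (tilted P1 P2 lam) P2 }

/-- `R_γ = R_FL ∪ ([0,E1(γ)] × [0,E2(γ)])`. -/
def Rgamma (P1 P2 : X → ℝ) (γ : ℝ) : Set (ℝ × ℝ) :=
  RFL P1 P2 ∪ (Set.Icc 0 (E1exp P1 P2 γ) ×ˢ Set.Icc 0 (E2exp P1 P2 γ))

/-- `K·S = {K·x : x ∈ S}` for `S ⊆ ℝ²`. -/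
def scaleSet (K : ℕ) (S : Set (ℝ × ℝ)) : Set (ℝ × ℝ) :=
  (fun p : ℝ × ℝ => ((K : ℝ) * p.1, (K : ℝ) * p.2)) '' S

/-- Probability of the i.i.d. sample sequence `x` under the distribution `P`. -/
def prodProb (P : X → ℝ) {N : ℕ} (x : Fin N → X) : ℝ := ∏ i, P (x i)

/-- The first `n` samples, as a list. -/
def histX {N : ℕ} (x : Fin N → X) (n : ℕ) : List X := (List.ofFn x).take n

/-- A sequential binary hypothesis test whose stopping time is almost surely bounded
by `N`: a stopping time `τ` with respect to the filtration `σ(X_1,…,X_n)` together with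
a decision (`accept1 = true` means "choose `H1`") taken at the stopping time; the
decision regions are `A1^τ = {accept1}` and `A2^τ = {¬ accept1}`. -/
structure SeqTest (X : Type) [Fintype X] (N : ℕ) where
  τ : (Fin N → X) → ℕ
  τ_le : ∀ x, τ x ≤ N
  τ_stopping : ∀ x x', histX x' (τ x) = histX x (τ x) → τ x' = τ x
  accept1 : List X → Bool

/-- Type-I error probability `P1(A2^τ)`. -/
def errProb1 (P1 : X → ℝ) {N : ℕ} (T : SeqTest X N) : ℝ :=
  ∑ x : Fin N → X, prodProb P1 x *
    (if T.accept1 (histX x (T.τ x)) = false then 1 else 0)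

/-- Type-II error probability `P2(A1^τ)`. -/
def errProb2 (P2 : X → ℝ) {N : ℕ} (T : SeqTest X N) : ℝ :=
  ∑ x : Fin N → X, prodProb P2 x *
    (if T.accept1 (histX x (T.τ x)) = true then 1 else 0)

/-- Probability `P(τ > n)` under sampling distribution `P`. -/
def lateProbHT (P : X → ℝ) {N : ℕ} (T : SeqTest X N) (n : ℕ) : ℝ :=
  ∑ x : Fin N → X, prodProb P x * (if n < T.τ x then 1 else 0)

/-- `(E1,E2)` is achievable in a `(γ,K)`-almost-fixed-length manner: for every `δ > 0`
and all large `n` there is a test with `P_i(τ > n) ≤ e^{−γn}`, `τ ≤ Kn` a.s. (encoded in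
the type of the test), `P1(A2^τ) ≤ e^{−(E1−δ)n}` and `P2(A1^τ) ≤ e^{−(E2−δ)n}`. -/
def AFLAchievable (P1 P2 : X → ℝ) (γ : ℝ) (K : ℕ) (E : ℝ × ℝ) : Prop :=
  ∀ δ > 0, ∃ N0 : ℕ, ∀ n : ℕ, n ≥ N0 → ∃ T : SeqTest X (K * n),
    lateProbHT P1 T n ≤ Real.exp (-(γ * n)) ∧
    lateProbHT P2 T n ≤ Real.exp (-(γ * n)) ∧
    errProb1 P1 T ≤ Real.exp (-((E.1 - δ) * n)) ∧
    errProb2 P2 T ≤ Real.exp (-((E.2 - δ) * n))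

/-- `R_AFL^(γ,K)`: the region of error-exponent pairs achievable in a
`(γ,K)`-almost-fixed-length manner. -/
def RAFL (P1 P2 : X → ℝ) (γ : ℝ) (K : ℕ) : Set (ℝ × ℝ) :=
  { E | AFLAchievable P1 P2 γ K E }

/-- Log-likelihood ratio `Σ_j log(P1(x_j)/P2(x_j))` of an observed sample list. -/
def llr (P1 P2 : X → ℝ) (l : List X) : ℝ :=
  (l.map fun a => Real.log (P1 a / P2 a)).sum

/-- The two-phase hypothesis test with Phase-I thresholds `α1, β1` and Phase-II
threshold `α`: Phase I collects `n` samples and stops, declaring `H1` if the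
log-likelihood ratio is `≥ α1·n` and `H2` if it is `≤ β1·n`; otherwise Phase II
collects `(K−1)n` additional samples and declares `H1` iff the overall log-likelihood
ratio is `≥ α·(Kn)`. -/
def twoPhaseTest (P1 P2 : X → ℝ) (α1 β1 α : ℝ) (K n : ℕ) (hK : 1 ≤ K) :
    SeqTest X (K * n) where
  τ := fun x =>
    if α1 * n ≤ llr P1 P2 (histX x n) ∨ llr P1 P2 (histX x n) ≤ β1 * n
    then n else K * n
  τ_le := by
    intro x
    try dsimp only
    split
    · exact Nat.le_mul_of_pos_left n (by omega)
    · exact le_rfl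
  τ_stopping := by
    intro x x' h
    try dsimp only at h ⊢
    by_cases hc : α1 * n ≤ llr P1 P2 (histX x n) ∨ llr P1 P2 (histX x n) ≤ β1 * n
    · rw [if_pos hc] at h ⊢
      rw [h, if_pos hc]
    · rw [if_neg hc] at h ⊢
      have hx : x' = x := by
        have h1 : List.ofFn x' = List.ofFn x := by
          simpa [histX, List.take_of_length_le, List.length_ofFn] using h
        exact List.ofFn_injective h1
      rw [hx, if_neg hc]
  accept1 := fun l =>
    if l.length ≤ n then decide (α1 * n ≤ llr P1 P2 l)
    else decide (α * (K * n : ℕ) ≤ llr P1 P2 l)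

namespace TPAux

set_option linter.unusedSectionVars false

variable {X : Type} [Fintype X]

lemma pmf_nonempty {p : X → ℝ} (h : IsPMF p) : Nonempty X := by
  by_contra hX
  rw [not_nonempty_iff] at hX
  have h2 := h.2
  rw [Finset.univ_eq_empty, Finset.sum_empty] at h2
  norm_num at h2

lemma ite_nonneg {p : Prop} [Decidable p] : (0:ℝ) ≤ if p then 1 else 0 := by
  split <;> norm_num

lemma prodProb_nonneg {P : X → ℝ} (hP : ∀ a, 0 ≤ P a) {N : ℕ} (x : Fin N → X) :
    0 ≤ prodProb P x :=
  Finset.prod_nonneg fun i _ => hP (x i)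

/-- per-sample log-likelihood ratio -/
def ll (P1 P2 : X → ℝ) (a : X) : ℝ := Real.log (P1 a / P2 a)

/-- normalizing constant of the tilted distribution -/
def Zc (P1 P2 : X → ℝ) (lam : ℝ) : ℝ := ∑ a, P1 a ^ (1 - lam) * P2 a ^ lam

/-- mean of `ll` under the tilted distribution -/
def bb (P1 P2 : X → ℝ) (lam : ℝ) : ℝ := ∑ a, tilted P1 P2 lam a * ll P1 P2 a

section basic

variable {P1 P2 : X → ℝ} (hs1 : ∀ x, 0 < P1 x) (hs2 : ∀ x, 0 < P2 x)

include hs1 hs2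

lemma repr1 (lam : ℝ) (a : X) :
    P1 a ^ (1 - lam) * P2 a ^ lam = P1 a * Real.exp (-(lam * ll P1 P2 a)) := by
  have h1 := hs1 a; have h2 := hs2 a
  have key : ∀ u : ℝ, P1 a * Real.exp u = Real.exp (Real.log (P1 a) + u) := fun u => by
    rw [Real.exp_add, Real.exp_log h1]
  rw [Real.rpow_def_of_pos h1, Real.rpow_def_of_pos h2, ← Real.exp_add, key,
    ll, Real.log_div h1.ne' h2.ne']
  congr 1; ring

lemma repr2 (lam : ℝ) (a : X) :
    P1 a ^ (1 - lam) * P2 a ^ lam = P2 a * Real.exp ((1 - lam) * ll P1 P2 a) := by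
  have h1 := hs1 a; have h2 := hs2 a
  have key : ∀ u : ℝ, P2 a * Real.exp u = Real.exp (Real.log (P2 a) + u) := fun u => by
    rw [Real.exp_add, Real.exp_log h2]
  rw [Real.rpow_def_of_pos h1, Real.rpow_def_of_pos h2, ← Real.exp_add, key,
    ll, Real.log_div h1.ne' h2.ne']
  congr 1; ring

lemma Zc_pos [Nonempty X] (lam : ℝ) : 0 < Zc P1 P2 lam := by
  apply Finset.sum_pos (fun a _ => ?_) Finset.univ_nonempty
  exact mul_pos (Real.rpow_pos_of_pos (hs1 a) _) (Real.rpow_pos_of_pos (hs2 a) _)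

omit hs1 hs2 in
lemma tilted_def' (lam : ℝ) (a : X) :
    tilted P1 P2 lam a = P1 a ^ (1 - lam) * P2 a ^ lam / Zc P1 P2 lam := rfl

lemma tilted_pos [Nonempty X] (lam : ℝ) (a : X) : 0 < tilted P1 P2 lam a := by
  rw [tilted_def']
  exact div_pos (mul_pos (Real.rpow_pos_of_pos (hs1 a) _)
    (Real.rpow_pos_of_pos (hs2 a) _)) (Zc_pos hs1 hs2 lam)

lemma tilted_sum [Nonempty X] (lam : ℝ) : ∑ a, tilted P1 P2 lam a = 1 := by
  rw [show (fun a => tilted P1 P2 lam a) = fun a => P1 a ^ (1 - lam) * P2 a ^ lam / Zc P1 P2 lam from rfl]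
  rw [← Finset.sum_div]
  exact div_self (Zc_pos hs1 hs2 lam).ne'

lemma key1 [Nonempty X] (lam : ℝ) (a : X) :
    P1 a = Zc P1 P2 lam * tilted P1 P2 lam a * Real.exp (lam * ll P1 P2 a) := by
  have hz : Zc P1 P2 lam ≠ 0 := (Zc_pos hs1 hs2 lam).ne'
  rw [tilted_def', repr1 hs1 hs2]
  rw [show Zc P1 P2 lam * (P1 a * Real.exp (-(lam * ll P1 P2 a)) / Zc P1 P2 lam) *
        Real.exp (lam * ll P1 P2 a)
      = P1 a * (Real.exp (-(lam * ll P1 P2 a)) * Real.exp (lam * ll P1 P2 a)) from by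
    field_simp]
  rw [← Real.exp_add]; simp

lemma key2 [Nonempty X] (lam : ℝ) (a : X) :
    P2 a = Zc P1 P2 lam * tilted P1 P2 lam a * Real.exp (-((1 - lam) * ll P1 P2 a)) := by
  have hz : Zc P1 P2 lam ≠ 0 := (Zc_pos hs1 hs2 lam).ne'
  rw [tilted_def', repr2 hs1 hs2]
  rw [show Zc P1 P2 lam * (P2 a * Real.exp ((1 - lam) * ll P1 P2 a) / Zc P1 P2 lam) *
        Real.exp (-((1 - lam) * ll P1 P2 a))
      = P2 a * (Real.exp ((1 - lam) * ll P1 P2 a) * Real.exp (-((1 - lam) * ll P1 P2 a))) from by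
    field_simp]
  rw [← Real.exp_add]; simp

lemma log_tilted_div1 [Nonempty X] (lam : ℝ) (a : X) :
    Real.log (tilted P1 P2 lam a / P1 a) = -(lam * ll P1 P2 a) - Real.log (Zc P1 P2 lam) := by
  have hz : Zc P1 P2 lam ≠ 0 := (Zc_pos hs1 hs2 lam).ne'
  have hp : P1 a ≠ 0 := (hs1 a).ne'
  rw [tilted_def', repr1 hs1 hs2]
  rw [show P1 a * Real.exp (-(lam * ll P1 P2 a)) / Zc P1 P2 lam / P1 a
      = Real.exp (-(lam * ll P1 P2 a)) / Zc P1 P2 lam from by field_simp]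
  rw [Real.log_div (Real.exp_ne_zero _) hz, Real.log_exp]

lemma log_tilted_div2 [Nonempty X] (lam : ℝ) (a : X) :
    Real.log (tilted P1 P2 lam a / P2 a) = (1 - lam) * ll P1 P2 a - Real.log (Zc P1 P2 lam) := by
  have hz : Zc P1 P2 lam ≠ 0 := (Zc_pos hs1 hs2 lam).ne'
  have hp : P2 a ≠ 0 := (hs2 a).ne'
  rw [tilted_def', repr2 hs1 hs2]
  rw [show P2 a * Real.exp ((1 - lam) * ll P1 P2 a) / Zc P1 P2 lam / P2 a
      = Real.exp ((1 - lam) * ll P1 P2 a) / Zc P1 P2 lam from by field_simp]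
  rw [Real.log_div (Real.exp_ne_zero _) hz, Real.log_exp]

lemma kl1_eq [Nonempty X] (lam : ℝ) :
    klDiv (tilted P1 P2 lam) P1 = -(lam * bb P1 P2 lam) - Real.log (Zc P1 P2 lam) := by
  have : klDiv (tilted P1 P2 lam) P1
      = ∑ a, (-(lam * (tilted P1 P2 lam a * ll P1 P2 a))
          - Real.log (Zc P1 P2 lam) * tilted P1 P2 lam a) := by
    rw [klDiv]
    refine Finset.sum_congr rfl fun a _ => ?_
    rw [log_tilted_div1 hs1 hs2]
    ring
  rw [this, Finset.sum_sub_distrib, Finset.sum_neg_distrib, ← Finset.mul_sum,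
    ← Finset.mul_sum, tilted_sum hs1 hs2, mul_one, bb]

lemma kl2_eq [Nonempty X] (lam : ℝ) :
    klDiv (tilted P1 P2 lam) P2 = (1 - lam) * bb P1 P2 lam - Real.log (Zc P1 P2 lam) := by
  have : klDiv (tilted P1 P2 lam) P2
      = ∑ a, ((1 - lam) * (tilted P1 P2 lam a * ll P1 P2 a)
          - Real.log (Zc P1 P2 lam) * tilted P1 P2 lam a) := by
    rw [klDiv]
    refine Finset.sum_congr rfl fun a _ => ?_
    rw [log_tilted_div2 hs1 hs2]
    ring
  rw [this, Finset.sum_sub_distrib, ← Finset.mul_sum, ← Finset.mul_sum,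
    tilted_sum hs1 hs2, mul_one, bb]

lemma bb_eq_sub [Nonempty X] (lam : ℝ) :
    bb P1 P2 lam = klDiv (tilted P1 P2 lam) P2 - klDiv (tilted P1 P2 lam) P1 := by
  rw [kl1_eq hs1 hs2, kl2_eq hs1 hs2]; ring

lemma logZc_eq [Nonempty X] (lam : ℝ) :
    Real.log (Zc P1 P2 lam) = -(lam * bb P1 P2 lam) - klDiv (tilted P1 P2 lam) P1 := by
  rw [kl1_eq hs1 hs2]; ring

end basic

end TPAux
namespace TPAux

variable {X : Type} [Fintype X]

lemma jensen_le (w y : X → ℝ) (hw : ∀ a, 0 ≤ w a) (hw1 : ∑ a, w a = 1) :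
    Real.exp (∑ a, w a * y a) ≤ ∑ a, w a * Real.exp (y a) := by
  set t := ∑ a, w a * y a with ht
  have key : ∀ a, w a * (1 + (y a - t)) ≤ w a * Real.exp (y a - t) := fun a =>
    mul_le_mul_of_nonneg_left (by nlinarith [Real.add_one_le_exp (y a - t)]) (hw a)
  have hsum : ∑ a, w a * (1 + (y a - t)) = 1 := by
    simp only [mul_add, mul_sub, mul_one]
    rw [Finset.sum_add_distrib, Finset.sum_sub_distrib, hw1, ← Finset.sum_mul, hw1]
    ring
  have h2 : (1:ℝ) ≤ ∑ a, w a * Real.exp (y a - t) := by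
    rw [← hsum]; exact Finset.sum_le_sum fun a _ => key a
  have h3 : ∑ a, w a * Real.exp (y a - t) = Real.exp (-t) * ∑ a, w a * Real.exp (y a) := by
    rw [Finset.mul_sum]
    refine Finset.sum_congr rfl fun a _ => ?_
    rw [Real.exp_sub, Real.exp_neg]; ring
  rw [h3] at h2
  calc Real.exp t = Real.exp t * 1 := (mul_one _).symm
    _ ≤ Real.exp t * (Real.exp (-t) * ∑ a, w a * Real.exp (y a)) :=
        mul_le_mul_of_nonneg_left h2 (Real.exp_pos t).le
    _ = ∑ a, w a * Real.exp (y a) := by rw [← mul_assoc, ← Real.exp_add]; simp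

lemma jensen_lt (w y : X → ℝ) (hw : ∀ a, 0 ≤ w a) (hw1 : ∑ a, w a = 1)
    (hj : ∃ j, 0 < w j ∧ y j ≠ ∑ a, w a * y a) :
    Real.exp (∑ a, w a * y a) < ∑ a, w a * Real.exp (y a) := by
  set t := ∑ a, w a * y a with ht
  obtain ⟨j, hwj, hyj⟩ := hj
  have key : ∀ a, w a * (1 + (y a - t)) ≤ w a * Real.exp (y a - t) := fun a =>
    mul_le_mul_of_nonneg_left (by nlinarith [Real.add_one_le_exp (y a - t)]) (hw a)
  have keyj : w j * (1 + (y j - t)) < w j * Real.exp (y j - t) := by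
    apply mul_lt_mul_of_pos_left _ hwj
    have := Real.add_one_lt_exp (x := y j - t) (sub_ne_zero.mpr hyj)
    linarith
  have hsum : ∑ a, w a * (1 + (y a - t)) = 1 := by
    simp only [mul_add, mul_sub, mul_one]
    rw [Finset.sum_add_distrib, Finset.sum_sub_distrib, hw1, ← Finset.sum_mul, hw1]
    ring
  have h2 : (1:ℝ) < ∑ a, w a * Real.exp (y a - t) := by
    rw [← hsum]
    exact Finset.sum_lt_sum (fun a _ => key a) ⟨j, Finset.mem_univ j, keyj⟩
  have h3 : ∑ a, w a * Real.exp (y a - t) = Real.exp (-t) * ∑ a, w a * Real.exp (y a) := by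
    rw [Finset.mul_sum]
    refine Finset.sum_congr rfl fun a _ => ?_
    rw [Real.exp_sub, Real.exp_neg]; ring
  rw [h3] at h2
  calc Real.exp t = Real.exp t * 1 := (mul_one _).symm
    _ < Real.exp t * (Real.exp (-t) * ∑ a, w a * Real.exp (y a)) :=
        mul_lt_mul_of_pos_left h2 (Real.exp_pos t)
    _ = ∑ a, w a * Real.exp (y a) := by rw [← mul_assoc, ← Real.exp_add]; simp

lemma klDiv_pos' {p q : X → ℝ} (hp : ∀ a, 0 < p a) (hq : ∀ a, 0 < q a)
    (hp1 : ∑ a, p a = 1) (hq1 : ∑ a, q a = 1) (hne : p ≠ q) : 0 < klDiv p q := by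
  obtain ⟨j, hj⟩ := Function.ne_iff.mp hne
  have key : ∀ a, p a - q a ≤ p a * Real.log (p a / q a) := by
    intro a
    have hlog : Real.log (q a / p a) ≤ q a / p a - 1 :=
      Real.log_le_sub_one_of_pos (div_pos (hq a) (hp a))
    have hlogeq : Real.log (p a / q a) = -Real.log (q a / p a) := by
      rw [← Real.log_inv, inv_div]
    rw [hlogeq]
    have := (hp a)
    have h2 : p a * (q a / p a) = q a := by field_simp
    nlinarith
  have keyj : p j - q j < p j * Real.log (p j / q j) := by
    have hne1 : q j / p j ≠ 1 := by
      intro h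
      rw [div_eq_iff (hp j).ne', one_mul] at h
      exact hj h.symm
    have hlog : Real.log (q j / p j) < q j / p j - 1 :=
      Real.log_lt_sub_one_of_pos (div_pos (hq j) (hp j)) hne1
    have hlogeq : Real.log (p j / q j) = -Real.log (q j / p j) := by
      rw [← Real.log_inv, inv_div]
    rw [hlogeq]
    have := (hp j)
    have h2 : p j * (q j / p j) = q j := by field_simp
    nlinarith
  have : (0:ℝ) = ∑ a, (p a - q a) := by
    rw [Finset.sum_sub_distrib, hp1, hq1]; ring
  rw [klDiv, this]
  exact Finset.sum_lt_sum (fun a _ => key a) ⟨j, Finset.mem_univ j, keyj⟩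

section mono

variable {P1 P2 : X → ℝ} (h1 : IsPMF P1) (h2 : IsPMF P2)
  (hs1 : ∀ x, 0 < P1 x) (hs2 : ∀ x, 0 < P2 x)

include hs1 hs2

lemma Zc_eq1 (lam : ℝ) : Zc P1 P2 lam = ∑ a, P1 a * Real.exp (-(lam * ll P1 P2 a)) :=
  Finset.sum_congr rfl fun a _ => repr1 hs1 hs2 lam a

lemma Zc_eq2 (lam : ℝ) : Zc P1 P2 lam = ∑ a, P2 a * Real.exp ((1 - lam) * ll P1 P2 a) :=
  Finset.sum_congr rfl fun a _ => repr2 hs1 hs2 lam a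

include h1 in
lemma sumQexp1 [Nonempty X] (lam : ℝ) :
    ∑ a, tilted P1 P2 lam a * Real.exp (lam * ll P1 P2 a) = 1 / Zc P1 P2 lam := by
  have hz : Zc P1 P2 lam ≠ 0 := (Zc_pos hs1 hs2 lam).ne'
  have : ∀ a, tilted P1 P2 lam a * Real.exp (lam * ll P1 P2 a) = P1 a / Zc P1 P2 lam := by
    intro a
    rw [key1 hs1 hs2 lam a]  -- rewrites P1 a on RHS
    field_simp
  rw [Finset.sum_congr rfl fun a _ => this a, ← Finset.sum_div, h1.2]

end mono

end TPAux
namespace TPAux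

variable {X : Type} [Fintype X]

section mono2

variable {P1 P2 : X → ℝ} (h1 : IsPMF P1) (h2 : IsPMF P2)
  (hs1 : ∀ x, 0 < P1 x) (hs2 : ∀ x, 0 < P2 x)

include hs1 hs2

include h2 in
lemma sumQexp2 [Nonempty X] (lam : ℝ) :
    ∑ a, tilted P1 P2 lam a * Real.exp (-((1 - lam) * ll P1 P2 a)) = 1 / Zc P1 P2 lam := by
  have hz : Zc P1 P2 lam ≠ 0 := (Zc_pos hs1 hs2 lam).ne'
  have : ∀ a, tilted P1 P2 lam a * Real.exp (-((1 - lam) * ll P1 P2 a)) = P2 a / Zc P1 P2 lam := by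
    intro a
    rw [key2 hs1 hs2 lam a]
    field_simp
  rw [Finset.sum_congr rfl fun a _ => this a, ← Finset.sum_div, h2.2]

omit hs1 hs2 in
lemma klD12 : klDiv P1 P2 = ∑ a, P1 a * ll P1 P2 a := rfl

lemma klD21 : klDiv P2 P1 = -∑ a, P2 a * ll P1 P2 a := by
  rw [klDiv, ← Finset.sum_neg_distrib]
  refine Finset.sum_congr rfl fun a _ => ?_
  rw [ll, ← inv_div, Real.log_inv]
  ring

include h1 h2 in
lemma ll_nonconst (hne : P1 ≠ P2) : ∃ a b, ll P1 P2 a ≠ ll P1 P2 b := by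
  by_contra hc
  push_neg at hc
  have hX : Nonempty X := pmf_nonempty h1
  obtain ⟨a0⟩ := hX
  set c := ll P1 P2 a0 with hc0
  have hall : ∀ a, P1 a = Real.exp c * P2 a := by
    intro a
    have : ll P1 P2 a = c := hc a a0
    rw [ll] at this
    have hq : P1 a / P2 a = Real.exp c := by
      rw [← this, Real.exp_log (div_pos (hs1 a) (hs2 a))]
    rw [div_eq_iff (hs2 a).ne'] at hq
    exact hq
  have hsum : (1:ℝ) = Real.exp c := by
    have := h1.2
    rw [Finset.sum_congr rfl fun a _ => hall a, ← Finset.mul_sum, h2.2, mul_one] at this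
    exact this.symm
  apply hne
  funext a
  rw [hall a, ← hsum, one_mul]

omit hs1 hs2 in
lemma scaled_ll_ne (hnc : ∃ a b, ll P1 P2 a ≠ ll P1 P2 b) {k : ℝ} (hk : k ≠ 0) (t : ℝ) :
    ∃ a, k * ll P1 P2 a ≠ t := by
  by_contra hcon
  push_neg at hcon
  obtain ⟨a, b, hab⟩ := hnc
  apply hab
  have : k * ll P1 P2 a = k * ll P1 P2 b := by rw [hcon a, hcon b]
  exact mul_left_cancel₀ hk this

include h1 h2 in
/-- `D(Q_λ‖P1) < D(P2‖P1)` for `λ ∈ [0,1)`. -/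
lemma kl1_lt (hne : P1 ≠ P2) {lam : ℝ} (hlam0 : 0 ≤ lam) (hlam1 : lam < 1) :
    klDiv (tilted P1 P2 lam) P1 < klDiv P2 P1 := by
  have hX : Nonempty X := pmf_nonempty h1
  have hnc := ll_nonconst h1 h2 hs1 hs2 hne
  set D := klDiv P2 P1 with hD
  set Z := Zc P1 P2 lam with hZ
  have hZpos : 0 < Z := Zc_pos hs1 hs2 lam
  have hsumll : ∑ a, P2 a * ll P1 P2 a = -D := by
    rw [hD, klD21 hs1 hs2]; ring
  have hmean : ∑ a, P2 a * ((1 - lam) * ll P1 P2 a) = -((1 - lam) * D) := by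
    have e : ∑ a, P2 a * ((1 - lam) * ll P1 P2 a) = (1 - lam) * ∑ a, P2 a * ll P1 P2 a := by
      rw [Finset.mul_sum]
      exact Finset.sum_congr rfl fun a _ => by ring
    rw [e, hsumll]; ring
  -- strict Jensen under P2
  have hwit : ∃ j, 0 < P2 j ∧ (1 - lam) * ll P1 P2 j ≠ ∑ a, P2 a * ((1 - lam) * ll P1 P2 a) := by
    obtain ⟨j, hj⟩ := scaled_ll_ne hnc (k := 1 - lam) (by linarith)
      (∑ a, P2 a * ((1 - lam) * ll P1 P2 a))
    exact ⟨j, hs2 j, hj⟩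
  have hJ1 := jensen_lt P2 (fun a => (1 - lam) * ll P1 P2 a) h2.1 h2.2 hwit
  rw [hmean, ← Zc_eq2 hs1 hs2, ← hZ] at hJ1
  have hpsi : -((1 - lam) * D) < Real.log Z := (Real.lt_log_iff_exp_lt hZpos).mpr hJ1
  -- Jensen under Q
  have hQ0 : ∀ a, 0 ≤ tilted P1 P2 lam a := fun a => (tilted_pos hs1 hs2 lam a).le
  have hJ2 := jensen_le (tilted P1 P2 lam) (fun a => -((1 - lam) * ll P1 P2 a)) hQ0
    (tilted_sum hs1 hs2 lam)
  rw [sumQexp2 h2 hs1 hs2 lam] at hJ2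
  have hmean2 : ∑ a, tilted P1 P2 lam a * (-((1 - lam) * ll P1 P2 a)) = -((1 - lam) * bb P1 P2 lam) := by
    have e : ∑ a, tilted P1 P2 lam a * (-((1 - lam) * ll P1 P2 a))
        = -((1 - lam) * ∑ a, tilted P1 P2 lam a * ll P1 P2 a) := by
      rw [Finset.mul_sum, ← Finset.sum_neg_distrib]
      exact Finset.sum_congr rfl fun a _ => by ring
    rw [e, bb]
  rw [hmean2] at hJ2
  have hb : -((1 - lam) * bb P1 P2 lam) ≤ -Real.log Z := by
    have := (Real.le_log_iff_exp_le (by positivity : (0:ℝ) < 1 / Z)).mpr hJ2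
    rwa [one_div, Real.log_inv] at this
  have hbD : -D < bb P1 P2 lam := by
    have h1lam : (0:ℝ) < 1 - lam := by linarith
    have : (1 - lam) * -D < (1 - lam) * bb P1 P2 lam := by nlinarith
    exact (mul_lt_mul_iff_right₀ h1lam).mp this
  rw [kl1_eq hs1 hs2 lam, ← hZ]
  nlinarith [mul_le_mul_of_nonneg_left hbD.le hlam0]

include h1 h2 in
/-- `D(Q_λ‖P2) < D(P1‖P2)` for `λ ∈ (0,1]`. -/
lemma kl2_lt (hne : P1 ≠ P2) {lam : ℝ} (hlam0 : 0 < lam) (hlam1 : lam ≤ 1) :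
    klDiv (tilted P1 P2 lam) P2 < klDiv P1 P2 := by
  have hX : Nonempty X := pmf_nonempty h1
  have hnc := ll_nonconst h1 h2 hs1 hs2 hne
  set D := klDiv P1 P2 with hD
  set Z := Zc P1 P2 lam with hZ
  have hZpos : 0 < Z := Zc_pos hs1 hs2 lam
  have hsumll : ∑ a, P1 a * ll P1 P2 a = D := by rw [hD, klD12]
  have hmean : ∑ a, P1 a * (-(lam * ll P1 P2 a)) = -(lam * D) := by
    have e : ∑ a, P1 a * (-(lam * ll P1 P2 a)) = -(lam * ∑ a, P1 a * ll P1 P2 a) := by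
      rw [Finset.mul_sum, ← Finset.sum_neg_distrib]
      exact Finset.sum_congr rfl fun a _ => by ring
    rw [e, hsumll]
  have hwit : ∃ j, 0 < P1 j ∧ -(lam * ll P1 P2 j) ≠ ∑ a, P1 a * (-(lam * ll P1 P2 a)) := by
    obtain ⟨j, hj⟩ := scaled_ll_ne hnc (k := -lam) (by linarith)
      (∑ a, P1 a * (-(lam * ll P1 P2 a)))
    exact ⟨j, hs1 j, by rw [← neg_mul]; exact hj⟩
  have hJ1 := jensen_lt P1 (fun a => -(lam * ll P1 P2 a)) h1.1 h1.2 hwit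
  have hZ1 : ∑ a, P1 a * Real.exp (-(lam * ll P1 P2 a)) = Z := (Zc_eq1 hs1 hs2 lam).symm
  rw [hmean, hZ1] at hJ1
  have hpsi : -(lam * D) < Real.log Z := (Real.lt_log_iff_exp_lt hZpos).mpr hJ1
  have hQ0 : ∀ a, 0 ≤ tilted P1 P2 lam a := fun a => (tilted_pos hs1 hs2 lam a).le
  have hJ2 := jensen_le (tilted P1 P2 lam) (fun a => lam * ll P1 P2 a) hQ0
    (tilted_sum hs1 hs2 lam)
  rw [sumQexp1 h1 hs1 hs2 lam] at hJ2
  have hmean2 : ∑ a, tilted P1 P2 lam a * (lam * ll P1 P2 a) = lam * bb P1 P2 lam := by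
    have e : ∑ a, tilted P1 P2 lam a * (lam * ll P1 P2 a)
        = lam * ∑ a, tilted P1 P2 lam a * ll P1 P2 a := by
      rw [Finset.mul_sum]
      exact Finset.sum_congr rfl fun a _ => by ring
    rw [e, bb]
  rw [hmean2] at hJ2
  have hb : lam * bb P1 P2 lam ≤ -Real.log Z := by
    have := (Real.le_log_iff_exp_le (by positivity : (0:ℝ) < 1 / Z)).mpr hJ2
    rwa [one_div, Real.log_inv] at this
  have hbD : bb P1 P2 lam < D := by
    have : lam * bb P1 P2 lam < lam * D := by nlinarith
    exact (mul_lt_mul_iff_right₀ hlam0).mp this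
  rw [kl2_eq hs1 hs2 lam, ← hZ]
  nlinarith [mul_le_mul_of_nonneg_left hbD.le (by linarith : (0:ℝ) ≤ 1 - lam)]

include h2 in
omit hs2 in
lemma tilted_one' : tilted P1 P2 1 = P2 := by
  funext a
  rw [tilted]
  norm_num [Real.rpow_one]
  rw [h2.2, div_one]

include h1 in
omit hs1 in
lemma tilted_zero' : tilted P1 P2 0 = P1 := by
  funext a
  rw [tilted]
  norm_num [Real.rpow_one]
  rw [h1.2, div_one]

include h1 h2 in
lemma kl1_le (hne : P1 ≠ P2) {lam : ℝ} (hlam : lam ∈ Set.Icc (0:ℝ) 1) :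
    klDiv (tilted P1 P2 lam) P1 ≤ klDiv P2 P1 := by
  rcases lt_or_eq_of_le hlam.2 with h | h
  · exact (kl1_lt h1 h2 hs1 hs2 hne hlam.1 h).le
  · rw [h, tilted_one' h2 hs1]

include h1 h2 in
lemma kl2_le (hne : P1 ≠ P2) {lam : ℝ} (hlam : lam ∈ Set.Icc (0:ℝ) 1) :
    klDiv (tilted P1 P2 lam) P2 ≤ klDiv P1 P2 := by
  rcases lt_or_eq_of_le hlam.1 with h | h
  · exact (kl2_lt h1 h2 hs1 hs2 hne h hlam.2).le
  · rw [← h, tilted_zero' h1 hs2]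

omit hs2 in
lemma klDiv_self_eq_zero : klDiv P1 P1 = 0 := by
  rw [klDiv]
  rw [Finset.sum_congr rfl fun a _ => by
    rw [div_self (hs1 a).ne', Real.log_one, mul_zero]]
  exact Finset.sum_const_zero

include h1 h2 in
lemma Dstar_pos (hne : P1 ≠ P2) {lamstar : ℝ}
    (hstar : klDiv (tilted P1 P2 lamstar) P1 = klDiv (tilted P1 P2 lamstar) P2) :
    0 < klDiv (tilted P1 P2 lamstar) P1 := by
  have hX : Nonempty X := pmf_nonempty h1
  have hQne : tilted P1 P2 lamstar ≠ P1 := by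
    intro hQP1
    have h0 : klDiv (tilted P1 P2 lamstar) P1 = 0 := by
      rw [hQP1]; exact klDiv_self_eq_zero hs1
    have h12 : klDiv (tilted P1 P2 lamstar) P2 = klDiv P1 P2 := by rw [hQP1]
    have := klDiv_pos' hs1 hs2 h1.2 h2.2 hne
    rw [← h12, ← hstar, h0] at this
    exact lt_irrefl 0 this
  exact klDiv_pos' (tilted_pos hs1 hs2 lamstar) hs1 (tilted_sum hs1 hs2 lamstar) h1.2 hQne

end mono2

end TPAux
namespace TPAux

set_option linter.unusedSectionVars false

variable {X : Type} [Fintype X]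

lemma card_filter_lt {N : ℕ} {m : ℕ} (hm : m ≤ N) :
    (Finset.univ.filter fun i : Fin N => (i : ℕ) < m).card = m := by
  rw [Finset.card_filter]
  rw [Fin.sum_univ_eq_sum_range (fun j => if j < m then 1 else 0) N]
  rw [← Finset.card_filter]
  have : (Finset.range N).filter (fun j => j < m) = Finset.range m := by
    ext j
    simp only [Finset.mem_filter, Finset.mem_range]
    omega
  rw [this, Finset.card_range]

lemma llr_hist {P1 P2 : X → ℝ} {N m : ℕ} (hm : m ≤ N) (x : Fin N → X) :
    llr P1 P2 (histX x m)
      = ∑ i ∈ Finset.univ.filter (fun i : Fin N => (i : ℕ) < m), ll P1 P2 (x i) := by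
  rw [llr, histX, List.map_take, List.map_ofFn, List.sum_take_ofFn]
  rfl

/-- sum over all sequences of a product of per-coordinate functions -/
lemma sum_prod_coord {N : ℕ} (g : Fin N → X → ℝ) :
    ∑ x : Fin N → X, ∏ i, g i (x i) = ∏ i, ∑ a, g i a := by
  rw [Finset.prod_univ_sum]
  rw [← Fintype.piFinset_univ]

section chern

variable {P1 P2 : X → ℝ} (h1 : IsPMF P1) (h2 : IsPMF P2)
  (hs1 : ∀ x, 0 < P1 x) (hs2 : ∀ x, 0 < P2 x)

include h1 hs1 hs2

/-- Chernoff bound for the lower tail of the LLR under `P1`. -/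
lemma chern1 {N m : ℕ} (hm : m ≤ N) {lam : ℝ} (hlam : lam ∈ Set.Icc (0:ℝ) 1)
    (p : (Fin N → X) → Prop) [DecidablePred p]
    (hp : ∀ x, p x → llr P1 P2 (histX x m) ≤ bb P1 P2 lam * m) :
    ∑ x : Fin N → X, prodProb P1 x * (if p x then (1:ℝ) else 0)
      ≤ Real.exp (-(m * klDiv (tilted P1 P2 lam) P1)) := by
  have hX : Nonempty X := pmf_nonempty h1
  set Q := tilted P1 P2 lam with hQ
  set Z := Zc P1 P2 lam with hZ
  have hZpos : 0 < Z := Zc_pos hs1 hs2 lam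
  set F := Finset.univ.filter (fun i : Fin N => (i : ℕ) < m) with hF
  set c := bb P1 P2 lam * m with hc
  set g : Fin N → X → ℝ := fun i a => if (i : ℕ) < m then Z * Q a else P1 a with hg
  have hgnn : ∀ i a, 0 ≤ g i a := by
    intro i a
    rw [hg]
    dsimp only
    split
    · exact (mul_pos hZpos (tilted_pos hs1 hs2 lam a)).le
    · exact (hs1 a).le
  have hterm : ∀ x : Fin N → X, prodProb P1 x * (if p x then (1:ℝ) else 0)
      ≤ Real.exp (lam * c) * ∏ i, g i (x i) := by
    intro x
    by_cases hx : p x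
    · rw [if_pos hx, mul_one]
      have e1 : prodProb P1 x = (∏ i, g i (x i)) *
          ∏ i : Fin N, (if (i : ℕ) < m then Real.exp (lam * ll P1 P2 (x i)) else 1) := by
        rw [prodProb, ← Finset.prod_mul_distrib]
        refine Finset.prod_congr rfl fun i _ => ?_
        rw [hg]
        dsimp only
        by_cases him : (i : ℕ) < m
        · rw [if_pos him, if_pos him, mul_assoc, ← mul_assoc]
          exact key1 hs1 hs2 lam (x i)
        · rw [if_neg him, if_neg him, mul_one]
      have e2 : ∏ i : Fin N, (if (i : ℕ) < m then Real.exp (lam * ll P1 P2 (x i)) else 1)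
          = Real.exp (lam * llr P1 P2 (histX x m)) := by
        rw [Finset.prod_ite, Finset.prod_const_one, mul_one, ← Real.exp_sum,
          ← Finset.mul_sum, ← llr_hist hm]
      rw [e1, e2, mul_comm]
      apply mul_le_mul_of_nonneg_right _ (Finset.prod_nonneg fun i _ => hgnn i (x i))
      exact Real.exp_le_exp.mpr (mul_le_mul_of_nonneg_left (hp x hx) hlam.1)
    · rw [if_neg hx, mul_zero]
      exact mul_nonneg (Real.exp_pos _).le (Finset.prod_nonneg fun i _ => hgnn i (x i))
  calc ∑ x : Fin N → X, prodProb P1 x * (if p x then (1:ℝ) else 0)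
      ≤ ∑ x : Fin N → X, Real.exp (lam * c) * ∏ i, g i (x i) :=
        Finset.sum_le_sum fun x _ => hterm x
    _ = Real.exp (lam * c) * ∑ x : Fin N → X, ∏ i, g i (x i) := by rw [← Finset.mul_sum]
    _ = Real.exp (lam * c) * ∏ i, ∑ a, g i a := by rw [sum_prod_coord]
    _ = Real.exp (lam * c) * ∏ i : Fin N, (if (i : ℕ) < m then Z else 1) := by
        congr 1
        refine Finset.prod_congr rfl fun i _ => ?_
        rw [hg]
        dsimp only
        split
        · rw [← Finset.mul_sum, tilted_sum hs1 hs2, mul_one]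
        · exact h1.2
    _ = Real.exp (lam * c) * Z ^ m := by
        rw [Finset.prod_ite, Finset.prod_const_one, mul_one, Finset.prod_const,
          card_filter_lt hm]
    _ = Real.exp (lam * c + m * Real.log Z) := by
        rw [Real.exp_add, Real.exp_nat_mul, Real.exp_log hZpos]
    _ = Real.exp (-(m * klDiv (tilted P1 P2 lam) P1)) := by
        congr 1
        rw [kl1_eq hs1 hs2 lam, ← hZ, hc]
        ring

omit h1 in
include h2 in
/-- Chernoff bound for the upper tail of the LLR under `P2`. -/
lemma chern2 {N m : ℕ} (hm : m ≤ N) {lam : ℝ} (hlam : lam ∈ Set.Icc (0:ℝ) 1)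
    (p : (Fin N → X) → Prop) [DecidablePred p]
    (hp : ∀ x, p x → bb P1 P2 lam * m ≤ llr P1 P2 (histX x m)) :
    ∑ x : Fin N → X, prodProb P2 x * (if p x then (1:ℝ) else 0)
      ≤ Real.exp (-(m * klDiv (tilted P1 P2 lam) P2)) := by
  have hX : Nonempty X := pmf_nonempty h2
  set Q := tilted P1 P2 lam with hQ
  set Z := Zc P1 P2 lam with hZ
  have hZpos : 0 < Z := Zc_pos hs1 hs2 lam
  set c := bb P1 P2 lam * m with hc
  set g : Fin N → X → ℝ := fun i a => if (i : ℕ) < m then Z * Q a else P2 a with hg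
  have hgnn : ∀ i a, 0 ≤ g i a := by
    intro i a
    rw [hg]
    dsimp only
    split
    · exact (mul_pos hZpos (tilted_pos hs1 hs2 lam a)).le
    · exact (hs2 a).le
  have hterm : ∀ x : Fin N → X, prodProb P2 x * (if p x then (1:ℝ) else 0)
      ≤ Real.exp (-((1 - lam) * c)) * ∏ i, g i (x i) := by
    intro x
    by_cases hx : p x
    · rw [if_pos hx, mul_one]
      have e1 : prodProb P2 x = (∏ i, g i (x i)) *
          ∏ i : Fin N, (if (i : ℕ) < m then Real.exp (-((1 - lam) * ll P1 P2 (x i))) else 1) := by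
        rw [prodProb, ← Finset.prod_mul_distrib]
        refine Finset.prod_congr rfl fun i _ => ?_
        rw [hg]
        dsimp only
        by_cases him : (i : ℕ) < m
        · rw [if_pos him, if_pos him, mul_assoc, ← mul_assoc]
          exact key2 hs1 hs2 lam (x i)
        · rw [if_neg him, if_neg him, mul_one]
      have e2 : ∏ i : Fin N, (if (i : ℕ) < m then Real.exp (-((1 - lam) * ll P1 P2 (x i))) else 1)
          = Real.exp (-((1 - lam) * llr P1 P2 (histX x m))) := by
        rw [Finset.prod_ite, Finset.prod_const_one, mul_one, ← Real.exp_sum]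
        congr 1
        rw [llr_hist hm, Finset.mul_sum, ← Finset.sum_neg_distrib]
      rw [e1, e2, mul_comm]
      apply mul_le_mul_of_nonneg_right _ (Finset.prod_nonneg fun i _ => hgnn i (x i))
      apply Real.exp_le_exp.mpr
      have h1lam : (0:ℝ) ≤ 1 - lam := by linarith [hlam.2]
      have := mul_le_mul_of_nonneg_left (hp x hx) h1lam
      linarith
    · rw [if_neg hx, mul_zero]
      exact mul_nonneg (Real.exp_pos _).le (Finset.prod_nonneg fun i _ => hgnn i (x i))
  calc ∑ x : Fin N → X, prodProb P2 x * (if p x then (1:ℝ) else 0)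
      ≤ ∑ x : Fin N → X, Real.exp (-((1 - lam) * c)) * ∏ i, g i (x i) :=
        Finset.sum_le_sum fun x _ => hterm x
    _ = Real.exp (-((1 - lam) * c)) * ∑ x : Fin N → X, ∏ i, g i (x i) := by
        rw [← Finset.mul_sum]
    _ = Real.exp (-((1 - lam) * c)) * ∏ i, ∑ a, g i a := by rw [sum_prod_coord]
    _ = Real.exp (-((1 - lam) * c)) * ∏ i : Fin N, (if (i : ℕ) < m then Z else 1) := by
        congr 1
        refine Finset.prod_congr rfl fun i _ => ?_
        rw [hg]
        dsimp only
        split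
        · rw [← Finset.mul_sum, tilted_sum hs1 hs2, mul_one]
        · exact h2.2
    _ = Real.exp (-((1 - lam) * c)) * Z ^ m := by
        rw [Finset.prod_ite, Finset.prod_const_one, mul_one, Finset.prod_const,
          card_filter_lt hm]
    _ = Real.exp (-((1 - lam) * c) + m * Real.log Z) := by
        rw [Real.exp_add, Real.exp_nat_mul, Real.exp_log hZpos]
    _ = Real.exp (-(m * klDiv (tilted P1 P2 lam) P2)) := by
        congr 1
        rw [kl2_eq hs1 hs2 lam, ← hZ, hc]
        ring

end chern

end TPAux
namespace TPAux

set_option linter.unusedSectionVars false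

variable {X : Type} [Fintype X]

section test

variable {P1 P2 : X → ℝ} (h1 : IsPMF P1) (h2 : IsPMF P2)
  (hs1 : ∀ x, 0 < P1 x) (hs2 : ∀ x, 0 < P2 x)

lemma hist_len {N : ℕ} (x : Fin N → X) {m : ℕ} (hm : m ≤ N) :
    (histX x m).length = m := by
  simp [histX, List.length_take, List.length_ofFn]
  omega

/-- Decision analysis for a type-I error of the two-phase test. -/
lemma dec1 {K n : ℕ} (hK : 1 ≤ K) (hK2 : 2 ≤ K) (hn : 1 ≤ n) (α1 β1 : ℝ)
    (x : Fin (K * n) → X) :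
    (if (twoPhaseTest P1 P2 α1 β1 0 K n hK).accept1
        (histX x ((twoPhaseTest P1 P2 α1 β1 0 K n hK).τ x)) = false then (1:ℝ) else 0)
      ≤ (if llr P1 P2 (histX x n) ≤ β1 * n then 1 else 0)
        + (if llr P1 P2 (histX x (K * n)) ≤ 0 then 1 else 0) := by
  have hnKn : n ≤ K * n := Nat.le_mul_of_pos_left n (by omega)
  have hlen1 : (histX x n).length = n := hist_len x hnKn
  have hlen2 : (histX x (K * n)).length = K * n := hist_len x le_rfl
  have hKn_gt : ¬ (K * n ≤ n) := by nlinarith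
  by_cases hc : α1 * n ≤ llr P1 P2 (histX x n) ∨ llr P1 P2 (histX x n) ≤ β1 * n
  · have hτ : (twoPhaseTest P1 P2 α1 β1 0 K n hK).τ x = n := by
      simp only [twoPhaseTest]
      rw [if_pos hc]
    rw [hτ]
    by_cases hacc : α1 * n ≤ llr P1 P2 (histX x n)
    · have : (twoPhaseTest P1 P2 α1 β1 0 K n hK).accept1 (histX x n) = true := by
        simp only [twoPhaseTest]
        rw [if_pos (le_of_eq hlen1)]
        simpa using hacc
      rw [this]
      norm_num
      positivity
    · have hβ : llr P1 P2 (histX x n) ≤ β1 * n := hc.resolve_left hacc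
      have h0 : (0:ℝ) ≤ if llr P1 P2 (histX x (K * n)) ≤ 0 then (1:ℝ) else 0 := ite_nonneg
      rw [if_pos hβ]
      split <;> linarith
  · have hτ : (twoPhaseTest P1 P2 α1 β1 0 K n hK).τ x = K * n := by
      simp only [twoPhaseTest]
      rw [if_neg hc]
    rw [hτ]
    by_cases hS : (0:ℝ) ≤ llr P1 P2 (histX x (K * n))
    · have : (twoPhaseTest P1 P2 α1 β1 0 K n hK).accept1 (histX x (K * n)) = true := by
        simp only [twoPhaseTest]
        rw [if_neg (by rw [hlen2]; exact hKn_gt)]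
        simpa using hS
      rw [this]
      norm_num
      positivity
    · have hS' : llr P1 P2 (histX x (K * n)) ≤ 0 := (not_le.mp hS).le
      have h0 : (0:ℝ) ≤ if llr P1 P2 (histX x n) ≤ β1 * n then (1:ℝ) else 0 := ite_nonneg
      rw [if_pos hS']
      split <;> linarith

/-- Decision analysis for a type-II error of the two-phase test. -/
lemma dec2 {K n : ℕ} (hK : 1 ≤ K) (hK2 : 2 ≤ K) (hn : 1 ≤ n) (α1 β1 : ℝ)
    (x : Fin (K * n) → X) :
    (if (twoPhaseTest P1 P2 α1 β1 0 K n hK).accept1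
        (histX x ((twoPhaseTest P1 P2 α1 β1 0 K n hK).τ x)) = true then (1:ℝ) else 0)
      ≤ (if α1 * n ≤ llr P1 P2 (histX x n) then 1 else 0)
        + (if (0:ℝ) ≤ llr P1 P2 (histX x (K * n)) then 1 else 0) := by
  have hnKn : n ≤ K * n := Nat.le_mul_of_pos_left n (by omega)
  have hlen1 : (histX x n).length = n := hist_len x hnKn
  have hlen2 : (histX x (K * n)).length = K * n := hist_len x le_rfl
  have hKn_gt : ¬ (K * n ≤ n) := by nlinarith
  by_cases hc : α1 * n ≤ llr P1 P2 (histX x n) ∨ llr P1 P2 (histX x n) ≤ β1 * n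
  · have hτ : (twoPhaseTest P1 P2 α1 β1 0 K n hK).τ x = n := by
      simp only [twoPhaseTest]
      rw [if_pos hc]
    rw [hτ]
    by_cases hacc : α1 * n ≤ llr P1 P2 (histX x n)
    · have h0 : (0:ℝ) ≤ if (0:ℝ) ≤ llr P1 P2 (histX x (K * n)) then (1:ℝ) else 0 := ite_nonneg
      rw [if_pos hacc]
      split <;> linarith
    · have : (twoPhaseTest P1 P2 α1 β1 0 K n hK).accept1 (histX x n) = false := by
        simp only [twoPhaseTest]
        rw [if_pos (le_of_eq hlen1)]
        simpa using hacc
      rw [this]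
      norm_num
      positivity
  · have hτ : (twoPhaseTest P1 P2 α1 β1 0 K n hK).τ x = K * n := by
      simp only [twoPhaseTest]
      rw [if_neg hc]
    rw [hτ]
    by_cases hS : (0:ℝ) ≤ llr P1 P2 (histX x (K * n))
    · have h0 : (0:ℝ) ≤ if α1 * n ≤ llr P1 P2 (histX x n) then (1:ℝ) else 0 := ite_nonneg
      rw [if_pos hS]
      split <;> linarith
    · have : (twoPhaseTest P1 P2 α1 β1 0 K n hK).accept1 (histX x (K * n)) = false := by
        simp only [twoPhaseTest]
        rw [if_neg (by rw [hlen2]; exact hKn_gt)]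
        simpa using hS
      rw [this]
      norm_num
      positivity

end test

end TPAux
namespace TPAux

set_option linter.unusedSectionVars false

variable {X : Type} [Fintype X]

section bounds

variable {P1 P2 : X → ℝ} (h1 : IsPMF P1) (h2 : IsPMF P2)
  (hs1 : ∀ x, 0 < P1 x) (hs2 : ∀ x, 0 < P2 x)

include h1 h2 hs1 hs2

lemma errProb1_le {K n : ℕ} (hK : 1 ≤ K) (hK2 : 2 ≤ K) (hn : 1 ≤ n)
    {lam1 lamstar : ℝ} (hlam1 : lam1 ∈ Set.Icc (0:ℝ) 1) (hlamstar : lamstar ∈ Set.Icc (0:ℝ) 1)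
    {α1 β1 : ℝ} (hβ : β1 = bb P1 P2 lam1) (hbs : bb P1 P2 lamstar = 0) :
    errProb1 P1 (twoPhaseTest P1 P2 α1 β1 0 K n hK)
      ≤ Real.exp (-(n * klDiv (tilted P1 P2 lam1) P1))
        + Real.exp (-((K * n : ℕ) * klDiv (tilted P1 P2 lamstar) P1)) := by
  have hnKn : n ≤ K * n := Nat.le_mul_of_pos_left n (by omega)
  rw [errProb1]
  have step1 : ∑ x : Fin (K * n) → X, prodProb P1 x *
        (if (twoPhaseTest P1 P2 α1 β1 0 K n hK).accept1
            (histX x ((twoPhaseTest P1 P2 α1 β1 0 K n hK).τ x)) = false then (1:ℝ) else 0)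
      ≤ ∑ x : Fin (K * n) → X,
          (prodProb P1 x * (if llr P1 P2 (histX x n) ≤ β1 * n then (1:ℝ) else 0)
           + prodProb P1 x * (if llr P1 P2 (histX x (K * n)) ≤ 0 then (1:ℝ) else 0)) := by
    refine Finset.sum_le_sum fun x _ => ?_
    rw [← mul_add]
    exact mul_le_mul_of_nonneg_left (dec1 hK hK2 hn α1 β1 x) (prodProb_nonneg h1.1 x)
  refine step1.trans ?_
  rw [Finset.sum_add_distrib]
  apply add_le_add
  · apply chern1 h1 hs1 hs2 hnKn hlam1
    intro x hx
    rw [hβ] at hx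
    exact hx
  · apply chern1 h1 hs1 hs2 le_rfl hlamstar
    intro x hx
    rw [hbs, zero_mul]
    exact hx

lemma errProb2_le {K n : ℕ} (hK : 1 ≤ K) (hK2 : 2 ≤ K) (hn : 1 ≤ n)
    {lam2 lamstar : ℝ} (hlam2 : lam2 ∈ Set.Icc (0:ℝ) 1) (hlamstar : lamstar ∈ Set.Icc (0:ℝ) 1)
    {α1 β1 : ℝ} (hα : α1 = bb P1 P2 lam2) (hbs : bb P1 P2 lamstar = 0) :
    errProb2 P2 (twoPhaseTest P1 P2 α1 β1 0 K n hK)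
      ≤ Real.exp (-(n * klDiv (tilted P1 P2 lam2) P2))
        + Real.exp (-((K * n : ℕ) * klDiv (tilted P1 P2 lamstar) P2)) := by
  have hnKn : n ≤ K * n := Nat.le_mul_of_pos_left n (by omega)
  rw [errProb2]
  have step1 : ∑ x : Fin (K * n) → X, prodProb P2 x *
        (if (twoPhaseTest P1 P2 α1 β1 0 K n hK).accept1
            (histX x ((twoPhaseTest P1 P2 α1 β1 0 K n hK).τ x)) = true then (1:ℝ) else 0)
      ≤ ∑ x : Fin (K * n) → X,
          (prodProb P2 x * (if α1 * n ≤ llr P1 P2 (histX x n) then (1:ℝ) else 0)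
           + prodProb P2 x * (if (0:ℝ) ≤ llr P1 P2 (histX x (K * n)) then (1:ℝ) else 0)) := by
    refine Finset.sum_le_sum fun x _ => ?_
    rw [← mul_add]
    exact mul_le_mul_of_nonneg_left (dec2 hK hK2 hn α1 β1 x) (prodProb_nonneg h2.1 x)
  refine step1.trans ?_
  rw [Finset.sum_add_distrib]
  apply add_le_add
  · apply chern2 h2 hs1 hs2 hnKn hlam2
    intro x hx
    rw [hα] at hx
    exact hx
  · apply chern2 h2 hs1 hs2 le_rfl hlamstar
    intro x hx
    rw [hbs, zero_mul]
    exact hx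

lemma late1_le {K n : ℕ} (hK : 1 ≤ K) {lam2 : ℝ} (hlam2 : lam2 ∈ Set.Icc (0:ℝ) 1)
    {α1 β1 : ℝ} (hα : α1 = bb P1 P2 lam2) :
    lateProbHT P1 (twoPhaseTest P1 P2 α1 β1 0 K n hK) n
      ≤ Real.exp (-(n * klDiv (tilted P1 P2 lam2) P1)) := by
  have hnKn : n ≤ K * n := Nat.le_mul_of_pos_left n (by omega)
  rw [lateProbHT]
  apply chern1 h1 hs1 hs2 hnKn hlam2
  intro x hx
  have hτ : ¬ (α1 * n ≤ llr P1 P2 (histX x n) ∨ llr P1 P2 (histX x n) ≤ β1 * n) := by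
    intro hc
    have : (twoPhaseTest P1 P2 α1 β1 0 K n hK).τ x = n := by
      simp only [twoPhaseTest]
      rw [if_pos hc]
    rw [this] at hx
    omega
  push_neg at hτ
  rw [hα] at hτ
  exact hτ.1.le

lemma late2_le {K n : ℕ} (hK : 1 ≤ K) {lam1 : ℝ} (hlam1 : lam1 ∈ Set.Icc (0:ℝ) 1)
    {α1 β1 : ℝ} (hβ : β1 = bb P1 P2 lam1) :
    lateProbHT P2 (twoPhaseTest P1 P2 α1 β1 0 K n hK) n
      ≤ Real.exp (-(n * klDiv (tilted P1 P2 lam1) P2)) := by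
  have hnKn : n ≤ K * n := Nat.le_mul_of_pos_left n (by omega)
  rw [lateProbHT]
  apply chern2 h2 hs1 hs2 hnKn hlam1
  intro x hx
  have hτ : ¬ (α1 * n ≤ llr P1 P2 (histX x n) ∨ llr P1 P2 (histX x n) ≤ β1 * n) := by
    intro hc
    have : (twoPhaseTest P1 P2 α1 β1 0 K n hK).τ x = n := by
      simp only [twoPhaseTest]
      rw [if_pos hc]
    rw [this] at hx
    omega
  push_neg at hτ
  rw [hβ] at hτ
  exact hτ.2.le

end bounds

end TPAux
namespace TPAux

set_option linter.unusedSectionVars false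

variable {X : Type} [Fintype X]

section lower

variable {P1 P2 : X → ℝ} (h1 : IsPMF P1) (h2 : IsPMF P2)
  (hs1 : ∀ x, 0 < P1 x) (hs2 : ∀ x, 0 < P2 x)

include h1 h2 hs1 hs2

lemma exists_min_ll' :
    ∃ a : X, ∀ b, ll P1 P2 a ≤ ll P1 P2 b := by
  have hX : Nonempty X := pmf_nonempty h1
  obtain ⟨a, -, ha⟩ := Finset.exists_min_image Finset.univ (ll P1 P2) Finset.univ_nonempty
  exact ⟨a, fun b => ha b (Finset.mem_univ b)⟩

/-- the minimum of `ll` is strictly below `bb lam`. -/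
lemma min_ll_lt_bb (hne : P1 ≠ P2) (lam : ℝ) {a : X}
    (ha' : ∀ b, ll P1 P2 a ≤ ll P1 P2 b) : ll P1 P2 a < bb P1 P2 lam := by
  have hX : Nonempty X := pmf_nonempty h1
  obtain ⟨u, v, huv⟩ := ll_nonconst h1 h2 hs1 hs2 hne
  have hbne : ∃ b, ll P1 P2 a ≠ ll P1 P2 b := by
    by_cases h : ll P1 P2 u = ll P1 P2 a
    · exact ⟨v, fun hv => huv (h.symm ▸ hv ▸ rfl)⟩
    · exact ⟨u, fun hu => h (hu ▸ rfl)⟩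
  obtain ⟨b, hb⟩ := hbne
  have hblt : ll P1 P2 a < ll P1 P2 b := lt_of_le_of_ne (ha' b) hb
  have : ∑ c, tilted P1 P2 lam c * ll P1 P2 a < ∑ c, tilted P1 P2 lam c * ll P1 P2 c := by
    apply Finset.sum_lt_sum
    · exact fun c _ => mul_le_mul_of_nonneg_left (ha' c) (tilted_pos hs1 hs2 lam c).le
    · exact ⟨b, Finset.mem_univ b,
        mul_lt_mul_of_pos_left hblt (tilted_pos hs1 hs2 lam b)⟩
  rwa [← Finset.sum_mul, tilted_sum hs1 hs2 lam, one_mul] at this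

lemma min_ll_le_bb (lam : ℝ) {a : X} (ha : ∀ b, ll P1 P2 a ≤ ll P1 P2 b) :
    ll P1 P2 a ≤ bb P1 P2 lam := by
  have hX : Nonempty X := pmf_nonempty h1
  have : ∑ c, tilted P1 P2 lam c * ll P1 P2 a ≤ ∑ c, tilted P1 P2 lam c * ll P1 P2 c :=
    Finset.sum_le_sum fun c _ => mul_le_mul_of_nonneg_left (ha c) (tilted_pos hs1 hs2 lam c).le
  rwa [← Finset.sum_mul, tilted_sum hs1 hs2 lam, one_mul] at this

/-- the two-phase test declares `H2` on the all-minimal-symbol sequence;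
positivity of the type-I error probability. -/
lemma errProb1_lb {K n : ℕ} (hK : 1 ≤ K) (hn : 1 ≤ n) (hne : P1 ≠ P2)
    {lam1 lam2 : ℝ} {α1 β1 : ℝ} (hα : α1 = bb P1 P2 lam2) (hβ : β1 = bb P1 P2 lam1)
    {a : X} (ha : ∀ b, ll P1 P2 a ≤ ll P1 P2 b) :
    P1 a ^ n ≤ errProb1 P1 (twoPhaseTest P1 P2 α1 β1 0 K n hK) := by
  have halt := min_ll_lt_bb h1 h2 hs1 hs2 hne lam2 ha
  have hale := min_ll_le_bb h1 h2 hs1 hs2 lam1 ha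
  have hnKn : n ≤ K * n := Nat.le_mul_of_pos_left n (by omega)
  have hnpos : (0:ℝ) < n := by exact_mod_cast hn
  set c := ll P1 P2 a with hc
  set g : Fin (K * n) → X → ℝ :=
    fun i b => if (i : ℕ) < n then (if b = a then P1 b else 0) else P1 b with hg
  have hSn : ∀ x : Fin (K * n) → X, (∀ i : Fin (K * n), (i : ℕ) < n → x i = a) →
      llr P1 P2 (histX x n) = n * c := by
    intro x hx
    rw [llr_hist hnKn]
    rw [Finset.sum_congr rfl fun i hi => by
      rw [hx i (Finset.mem_filter.mp hi).2, ← hc]]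
    rw [Finset.sum_const, card_filter_lt hnKn, nsmul_eq_mul]
  have hterm : ∀ x : Fin (K * n) → X,
      (∏ i, g i (x i)) ≤ prodProb P1 x *
        (if (twoPhaseTest P1 P2 α1 β1 0 K n hK).accept1
            (histX x ((twoPhaseTest P1 P2 α1 β1 0 K n hK).τ x)) = false then (1:ℝ) else 0) := by
    intro x
    by_cases hpre : ∀ i : Fin (K * n), (i : ℕ) < n → x i = a
    · have hgp : ∏ i, g i (x i) = prodProb P1 x := by
        rw [prodProb]
        refine Finset.prod_congr rfl fun i _ => ?_
        rw [hg]
        dsimp only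
        by_cases him : (i : ℕ) < n
        · rw [if_pos him, if_pos (hpre i him)]
        · rw [if_neg him]
      have hS := hSn x hpre
      have hcond : α1 * n ≤ llr P1 P2 (histX x n) ∨ llr P1 P2 (histX x n) ≤ β1 * n := by
        right
        rw [hS, hβ]
        nlinarith
      have hτ : (twoPhaseTest P1 P2 α1 β1 0 K n hK).τ x = n := by
        simp only [twoPhaseTest]
        rw [if_pos hcond]
      have hlen : (histX x n).length = n := hist_len x hnKn
      have hacc : (twoPhaseTest P1 P2 α1 β1 0 K n hK).accept1 (histX x n) = false := by
        simp only [twoPhaseTest]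
        rw [if_pos (le_of_eq hlen)]
        simp only [decide_eq_false_iff_not, not_le]
        rw [hS, hα]
        nlinarith
      rw [hτ, hacc, hgp]
      simp
    · push_neg at hpre
      obtain ⟨i, hi, hxi⟩ := hpre
      have : g i (x i) = 0 := by
        rw [hg]
        dsimp only
        rw [if_pos hi, if_neg hxi]
      rw [Finset.prod_eq_zero (Finset.mem_univ i) this]
      exact mul_nonneg (prodProb_nonneg h1.1 x) ite_nonneg
  have hsum : ∑ x : Fin (K * n) → X, ∏ i, g i (x i) = P1 a ^ n := by
    rw [sum_prod_coord]
    have : ∀ i : Fin (K * n), ∑ b, g i b = if (i : ℕ) < n then P1 a else 1 := by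
      intro i
      rw [hg]
      dsimp only
      split
      · rw [Finset.sum_ite_eq' Finset.univ a P1, if_pos (Finset.mem_univ a)]
      · exact h1.2
    rw [Finset.prod_congr rfl fun i _ => this i, Finset.prod_ite, Finset.prod_const,
      Finset.prod_const_one, mul_one, card_filter_lt hnKn]
  rw [errProb1, ← hsum]
  exact Finset.sum_le_sum fun x _ => hterm x

lemma exists_max_ll :
    ∃ a : X, ∀ b, ll P1 P2 b ≤ ll P1 P2 a := by
  have hX : Nonempty X := pmf_nonempty h1
  obtain ⟨a, -, ha⟩ := Finset.exists_max_image Finset.univ (ll P1 P2) Finset.univ_nonempty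
  exact ⟨a, fun b => ha b (Finset.mem_univ b)⟩

lemma bb_le_max_ll (lam : ℝ) {a : X} (ha : ∀ b, ll P1 P2 b ≤ ll P1 P2 a) :
    bb P1 P2 lam ≤ ll P1 P2 a := by
  have hX : Nonempty X := pmf_nonempty h1
  have : ∑ c, tilted P1 P2 lam c * ll P1 P2 c ≤ ∑ c, tilted P1 P2 lam c * ll P1 P2 a :=
    Finset.sum_le_sum fun c _ => mul_le_mul_of_nonneg_left (ha c) (tilted_pos hs1 hs2 lam c).le
  rwa [← Finset.sum_mul, tilted_sum hs1 hs2 lam, one_mul] at this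

/-- positivity of the type-II error probability. -/
lemma errProb2_lb {K n : ℕ} (hK : 1 ≤ K) (hn : 1 ≤ n)
    {lam2 : ℝ} {α1 β1 : ℝ} (hα : α1 = bb P1 P2 lam2)
    {a : X} (ha : ∀ b, ll P1 P2 b ≤ ll P1 P2 a) :
    P2 a ^ n ≤ errProb2 P2 (twoPhaseTest P1 P2 α1 β1 0 K n hK) := by
  have hale := bb_le_max_ll h1 h2 hs1 hs2 lam2 ha
  have hnKn : n ≤ K * n := Nat.le_mul_of_pos_left n (by omega)
  have hnpos : (0:ℝ) < n := by exact_mod_cast hn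
  set c := ll P1 P2 a with hc
  set g : Fin (K * n) → X → ℝ :=
    fun i b => if (i : ℕ) < n then (if b = a then P2 b else 0) else P2 b with hg
  have hSn : ∀ x : Fin (K * n) → X, (∀ i : Fin (K * n), (i : ℕ) < n → x i = a) →
      llr P1 P2 (histX x n) = n * c := by
    intro x hx
    rw [llr_hist hnKn]
    rw [Finset.sum_congr rfl fun i hi => by
      rw [hx i (Finset.mem_filter.mp hi).2, ← hc]]
    rw [Finset.sum_const, card_filter_lt hnKn, nsmul_eq_mul]
  have hterm : ∀ x : Fin (K * n) → X,
      (∏ i, g i (x i)) ≤ prodProb P2 x *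
        (if (twoPhaseTest P1 P2 α1 β1 0 K n hK).accept1
            (histX x ((twoPhaseTest P1 P2 α1 β1 0 K n hK).τ x)) = true then (1:ℝ) else 0) := by
    intro x
    by_cases hpre : ∀ i : Fin (K * n), (i : ℕ) < n → x i = a
    · have hgp : ∏ i, g i (x i) = prodProb P2 x := by
        rw [prodProb]
        refine Finset.prod_congr rfl fun i _ => ?_
        rw [hg]
        dsimp only
        by_cases him : (i : ℕ) < n
        · rw [if_pos him, if_pos (hpre i him)]
        · rw [if_neg him]
      have hS := hSn x hpre
      have hccond : α1 * n ≤ llr P1 P2 (histX x n) := by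
        rw [hS, hα]
        nlinarith
      have hcond : α1 * n ≤ llr P1 P2 (histX x n) ∨ llr P1 P2 (histX x n) ≤ β1 * n :=
        Or.inl hccond
      have hτ : (twoPhaseTest P1 P2 α1 β1 0 K n hK).τ x = n := by
        simp only [twoPhaseTest]
        rw [if_pos hcond]
      have hlen : (histX x n).length = n := hist_len x hnKn
      have hacc : (twoPhaseTest P1 P2 α1 β1 0 K n hK).accept1 (histX x n) = true := by
        simp only [twoPhaseTest]
        rw [if_pos (le_of_eq hlen)]
        simpa using hccond
      rw [hτ, hacc, hgp]
      simp
    · push_neg at hpre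
      obtain ⟨i, hi, hxi⟩ := hpre
      have : g i (x i) = 0 := by
        rw [hg]
        dsimp only
        rw [if_pos hi, if_neg hxi]
      rw [Finset.prod_eq_zero (Finset.mem_univ i) this]
      exact mul_nonneg (prodProb_nonneg h2.1 x) ite_nonneg
  have hsum : ∑ x : Fin (K * n) → X, ∏ i, g i (x i) = P2 a ^ n := by
    rw [sum_prod_coord]
    have : ∀ i : Fin (K * n), ∑ b, g i b = if (i : ℕ) < n then P2 a else 1 := by
      intro i
      rw [hg]
      dsimp only
      split
      · rw [Finset.sum_ite_eq' Finset.univ a P2, if_pos (Finset.mem_univ a)]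
      · exact h2.2
    rw [Finset.prod_congr rfl fun i _ => this i, Finset.prod_ite, Finset.prod_const,
      Finset.prod_const_one, mul_one, card_filter_lt hnKn]
  rw [errProb2, ← hsum]
  exact Finset.sum_le_sum fun x _ => hterm x

end lower

end TPAux
namespace TPAux

set_option linter.unusedSectionVars false

open Filter in
lemma le_liminf_aux (u : ℕ → ℝ) (E C B : ℝ) (hC : 0 ≤ C)
    (h : ∀ n : ℕ, 1 ≤ n → E - C * (1 / (n : ℝ)) ≤ u n)
    (hB : ∀ n : ℕ, 1 ≤ n → u n ≤ B) :
    E ≤ liminf u atTop := by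
  have hv : Tendsto (fun n : ℕ => E - C * (1 / (n : ℝ))) atTop (nhds E) := by
    have h0 : Tendsto (fun n : ℕ => 1 / (n : ℝ)) atTop (nhds 0) :=
      tendsto_one_div_atTop_nhds_zero_nat
    have := (tendsto_const_nhds (x := E) (f := atTop)).sub ((h0.const_mul C))
    simpa using this
  have h1 : liminf (fun n : ℕ => E - C * (1 / (n : ℝ))) atTop = E := hv.liminf_eq
  rw [← h1]
  apply Filter.liminf_le_liminf
  · filter_upwards [Filter.eventually_ge_atTop 1] with n hn using h n hn
  · exact hv.isBoundedUnder_ge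
  · apply Filter.IsBoundedUnder.isCoboundedUnder_ge
    refine ⟨B, ?_⟩
    rw [Filter.eventually_map]
    filter_upwards [Filter.eventually_ge_atTop 1] with n hn using hB n hn

lemma exponent_bounds (e B : ℝ) (n : ℕ) (hn : 1 ≤ n) (E : ℝ)
    (hup : e ≤ 2 * Real.exp (-((n : ℝ) * E))) (hlow : B ^ n ≤ e) (hB : 0 < B) :
    E - Real.log 2 * (1 / (n : ℝ)) ≤ -(1 / (n : ℝ)) * Real.log e ∧
      -(1 / (n : ℝ)) * Real.log e ≤ -Real.log B := by
  have hn0 : (0:ℝ) < n := by exact_mod_cast hn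
  have hn0' : (n:ℝ) ≠ 0 := hn0.ne'
  have hpos : 0 < e := lt_of_lt_of_le (pow_pos hB n) hlow
  have hneg : -(1 / (n:ℝ)) ≤ 0 := by
    have : (0:ℝ) ≤ 1 / (n:ℝ) := by positivity
    linarith
  have hlog1 : Real.log e ≤ Real.log 2 - (n:ℝ) * E := by
    have := Real.log_le_log hpos hup
    rw [Real.log_mul (by norm_num) (Real.exp_ne_zero _), Real.log_exp] at this
    linarith
  have hlog2 : (n:ℝ) * Real.log B ≤ Real.log e := by
    have := Real.log_le_log (pow_pos hB n) hlow
    rwa [Real.log_pow] at this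
  constructor
  · have hmul := mul_le_mul_of_nonpos_left hlog1 hneg
    have heq : -(1/(n:ℝ)) * (Real.log 2 - (n:ℝ) * E) = E - Real.log 2 * (1/(n:ℝ)) := by
      field_simp
      ring
    linarith
  · have hmul := mul_le_mul_of_nonpos_left hlog2 hneg
    have heq : -(1/(n:ℝ)) * ((n:ℝ) * Real.log B) = -Real.log B := by
      field_simp
    linarith

variable {X : Type} [Fintype X]

/-- the fixed-length likelihood-ratio test with threshold `θ·n`. -/
def fixedTest (P1 P2 : X → ℝ) (θ : ℝ) {N : ℕ} (n : ℕ) (h : n ≤ N) : SeqTest X N where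
  τ := fun _ => n
  τ_le := fun _ => h
  τ_stopping := fun _ _ _ => rfl
  accept1 := fun l => decide (θ * n ≤ llr P1 P2 l)

section fixed

variable {P1 P2 : X → ℝ} (h1 : IsPMF P1) (h2 : IsPMF P2)
  (hs1 : ∀ x, 0 < P1 x) (hs2 : ∀ x, 0 < P2 x)

lemma fixed_late (P : X → ℝ) {N n : ℕ} (h : n ≤ N) (θ : ℝ) :
    lateProbHT P (fixedTest P1 P2 θ n h) n = 0 := by
  rw [lateProbHT]
  simp [fixedTest]

include h1 hs1 hs2 in
lemma fixed_err1 {N n : ℕ} (h : n ≤ N) {lam : ℝ} (hlam : lam ∈ Set.Icc (0:ℝ) 1) :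
    errProb1 P1 (fixedTest P1 P2 (bb P1 P2 lam) n h)
      ≤ Real.exp (-(n * klDiv (tilted P1 P2 lam) P1)) := by
  rw [errProb1]
  apply chern1 h1 hs1 hs2 h hlam
  intro x hx
  have : (fixedTest P1 P2 (bb P1 P2 lam) n h).accept1
      (histX x ((fixedTest P1 P2 (bb P1 P2 lam) n h).τ x))
      = decide (bb P1 P2 lam * n ≤ llr P1 P2 (histX x n)) := rfl
  rw [this] at hx
  simp only [decide_eq_false_iff_not, not_le] at hx
  exact hx.le

include h2 hs1 hs2 in
lemma fixed_err2 {N n : ℕ} (h : n ≤ N) {lam : ℝ} (hlam : lam ∈ Set.Icc (0:ℝ) 1) :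
    errProb2 P2 (fixedTest P1 P2 (bb P1 P2 lam) n h)
      ≤ Real.exp (-(n * klDiv (tilted P1 P2 lam) P2)) := by
  rw [errProb2]
  apply chern2 h2 hs1 hs2 h hlam
  intro x hx
  have : (fixedTest P1 P2 (bb P1 P2 lam) n h).accept1
      (histX x ((fixedTest P1 P2 (bb P1 P2 lam) n h).τ x))
      = decide (bb P1 P2 lam * n ≤ llr P1 P2 (histX x n)) := rfl
  rw [this] at hx
  simpa using hx

end fixed

end TPAux
set_option maxHeartbeats 2000000 in
open TPAux in
open Filter in
/-- Let `K* = max{ D(P2‖P1)/D*, D(P1‖P2)/D* }`. For every `γ ≤ D*`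
and every `K ≥ K*`, the two-phase test run with Phase-II threshold `α = 0` (i.e.
`λ = λ*`) achieves every error-exponent pair on the boundary of `R_γ` (its type-I and
type-II error exponents are at least `E1(γ)` and `E2(γ)` respectively); in particular
`R_γ ⊆ R_AFL^(γ,K)` for all `K ≥ K*`. -/
theorem two_phase_test_alpha_zero
    {X : Type} [Fintype X]
    (P1 P2 : X → ℝ) (h1 : IsPMF P1) (h2 : IsPMF P2) (hne : P1 ≠ P2)
    (hs1 : ∀ x, 0 < P1 x) (hs2 : ∀ x, 0 < P2 x)
    (lamstar : ℝ) (hlamstar : lamstar ∈ Set.Icc (0:ℝ) 1)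
    (hstar : klDiv (tilted P1 P2 lamstar) P1 = klDiv (tilted P1 P2 lamstar) P2)
    (γ : ℝ) (hγ0 : 0 ≤ γ) (hγ : γ ≤ klDiv (tilted P1 P2 lamstar) P1)
    (K : ℕ) (hK : 1 ≤ K)
    (hKstar : max (klDiv P2 P1 / klDiv (tilted P1 P2 lamstar) P1)
        (klDiv P1 P2 / klDiv (tilted P1 P2 lamstar) P1) ≤ (K : ℝ))
    (lam1 : ℝ) (hlam1 : lam1 ∈ Set.Icc (0:ℝ) 1)
    (hlam1feas : γ ≤ klDiv (tilted P1 P2 lam1) P2)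
    (hlam1max : klDiv (tilted P1 P2 lam1) P1 = E1exp P1 P2 γ)
    (lam2 : ℝ) (hlam2 : lam2 ∈ Set.Icc (0:ℝ) 1)
    (hlam2feas : γ ≤ klDiv (tilted P1 P2 lam2) P1)
    (hlam2max : klDiv (tilted P1 P2 lam2) P2 = E2exp P1 P2 γ)
    (α1 β1 : ℝ)
    (hα1 : α1 = klDiv (tilted P1 P2 lam2) P2 - klDiv (tilted P1 P2 lam2) P1)
    (hβ1 : β1 = klDiv (tilted P1 P2 lam1) P2 - klDiv (tilted P1 P2 lam1) P1) :
    (E1exp P1 P2 γ ≤ liminf (fun n : ℕ =>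
        -(1 / (n : ℝ)) * Real.log
          (errProb1 P1 (twoPhaseTest P1 P2 α1 β1 0 K n hK))) atTop) ∧
    (E2exp P1 P2 γ ≤ liminf (fun n : ℕ =>
        -(1 / (n : ℝ)) * Real.log
          (errProb2 P2 (twoPhaseTest P1 P2 α1 β1 0 K n hK))) atTop) ∧
    Rgamma P1 P2 γ ⊆ RAFL P1 P2 γ K := by
  haveI hX : Nonempty X := pmf_nonempty h1
  set Ds := klDiv (tilted P1 P2 lamstar) P1 with hDs
  have hD : 0 < Ds := Dstar_pos h1 h2 hs1 hs2 hne hstar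
  have hK21 : klDiv P2 P1 ≤ K * Ds := by
    have := le_trans (le_max_left _ _) hKstar
    rw [div_le_iff₀ hD] at this
    linarith
  have hK12 : klDiv P1 P2 ≤ K * Ds := by
    have := le_trans (le_max_right _ _) hKstar
    rw [div_le_iff₀ hD] at this
    linarith
  have hbbstar : bb P1 P2 lamstar = 0 := by
    rw [bb_eq_sub hs1 hs2 lamstar, ← hstar]
    ring
  have hK2 : 2 ≤ K := by
    by_contra hc
    have hK1 : K = 1 := by omega
    rw [hK1] at hK21 hK12
    push_cast at hK21 hK12
    rw [one_mul] at hK21 hK12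
    rcases lt_or_eq_of_le hlamstar.2 with hlt | heq
    · have := kl1_lt h1 h2 hs1 hs2 hne hlamstar.1 hlt
      rw [← hDs] at this
      linarith
    · have hpos : 0 < lamstar := by rw [heq]; norm_num
      have := kl2_lt h1 h2 hs1 hs2 hne hpos hlamstar.2
      rw [← hstar] at this
      linarith
  set E1 := klDiv (tilted P1 P2 lam1) P1 with hE1def
  set E2 := klDiv (tilted P1 P2 lam2) P2 with hE2def
  have hE1K : E1 ≤ (K : ℝ) * Ds := (kl1_le h1 h2 hs1 hs2 hne hlam1).trans hK21
  have hE2K : E2 ≤ (K : ℝ) * Ds := (kl2_le h1 h2 hs1 hs2 hne hlam2).trans hK12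
  have hαb : α1 = bb P1 P2 lam2 := by rw [hα1, bb_eq_sub hs1 hs2 lam2]
  have hβb : β1 = bb P1 P2 lam1 := by rw [hβ1, bb_eq_sub hs1 hs2 lam1]
  obtain ⟨amin, hamin⟩ := exists_min_ll' h1 h2 hs1 hs2
  obtain ⟨amax, hamax⟩ := exists_max_ll h1 h2 hs1 hs2
  -- uniform upper bounds on the error probabilities
  have up1 : ∀ n : ℕ, 1 ≤ n →
      errProb1 P1 (twoPhaseTest P1 P2 α1 β1 0 K n hK) ≤ 2 * Real.exp (-((n : ℝ) * E1)) := by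
    intro n hn
    have hb := errProb1_le h1 h2 hs1 hs2 hK hK2 hn hlam1 hlamstar (α1 := α1) hβb hbbstar
    have hsec : Real.exp (-(((K * n : ℕ) : ℝ) * Ds)) ≤ Real.exp (-((n : ℝ) * E1)) := by
      apply Real.exp_le_exp.mpr
      have hcast : ((K * n : ℕ) : ℝ) = (K : ℝ) * n := by push_cast; ring
      rw [hcast]
      have hn0 : (0:ℝ) ≤ n := Nat.cast_nonneg n
      nlinarith
    rw [← hDs, ← hE1def] at hb
    have he1 : (0:ℝ) < Real.exp (-((n : ℝ) * E1)) := Real.exp_pos _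
    linarith
  have up2 : ∀ n : ℕ, 1 ≤ n →
      errProb2 P2 (twoPhaseTest P1 P2 α1 β1 0 K n hK) ≤ 2 * Real.exp (-((n : ℝ) * E2)) := by
    intro n hn
    have hb := errProb2_le h1 h2 hs1 hs2 hK hK2 hn hlam2 hlamstar (β1 := β1) hαb hbbstar
    have hsec : Real.exp (-(((K * n : ℕ) : ℝ) * klDiv (tilted P1 P2 lamstar) P2))
        ≤ Real.exp (-((n : ℝ) * E2)) := by
      apply Real.exp_le_exp.mpr
      rw [← hstar]
      have hcast : ((K * n : ℕ) : ℝ) = (K : ℝ) * n := by push_cast; ring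
      rw [hcast]
      have hn0 : (0:ℝ) ≤ n := Nat.cast_nonneg n
      nlinarith
    rw [← hE2def] at hb
    have he2 : (0:ℝ) < Real.exp (-((n : ℝ) * E2)) := Real.exp_pos _
    linarith
  have conj1 : E1exp P1 P2 γ ≤ liminf (fun n : ℕ =>
      -(1 / (n : ℝ)) * Real.log (errProb1 P1 (twoPhaseTest P1 P2 α1 β1 0 K n hK))) atTop := by
    rw [← hlam1max]
    have hbnds : ∀ n : ℕ, 1 ≤ n →
        (E1 - Real.log 2 * (1 / (n : ℝ)) ≤
          -(1 / (n : ℝ)) * Real.log (errProb1 P1 (twoPhaseTest P1 P2 α1 β1 0 K n hK)) ∧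
        -(1 / (n : ℝ)) * Real.log (errProb1 P1 (twoPhaseTest P1 P2 α1 β1 0 K n hK))
          ≤ -Real.log (P1 amin)) := fun n hn =>
      exponent_bounds _ _ n hn E1 (up1 n hn)
        (errProb1_lb h1 h2 hs1 hs2 hK hn hne hαb hβb hamin) (hs1 amin)
    exact le_liminf_aux _ E1 (Real.log 2) (-Real.log (P1 amin))
      (Real.log_nonneg one_le_two) (fun n hn => (hbnds n hn).1) (fun n hn => (hbnds n hn).2)
  have conj2 : E2exp P1 P2 γ ≤ liminf (fun n : ℕ =>
      -(1 / (n : ℝ)) * Real.log (errProb2 P2 (twoPhaseTest P1 P2 α1 β1 0 K n hK))) atTop := by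
    rw [← hlam2max]
    have hbnds : ∀ n : ℕ, 1 ≤ n →
        (E2 - Real.log 2 * (1 / (n : ℝ)) ≤
          -(1 / (n : ℝ)) * Real.log (errProb2 P2 (twoPhaseTest P1 P2 α1 β1 0 K n hK)) ∧
        -(1 / (n : ℝ)) * Real.log (errProb2 P2 (twoPhaseTest P1 P2 α1 β1 0 K n hK))
          ≤ -Real.log (P2 amax)) := fun n hn =>
      exponent_bounds _ _ n hn E2 (up2 n hn)
        (errProb2_lb h1 h2 hs1 hs2 hK hn (β1 := β1) hαb hamax) (hs2 amax)
    exact le_liminf_aux _ E2 (Real.log 2) (-Real.log (P2 amax))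
      (Real.log_nonneg one_le_two) (fun n hn => (hbnds n hn).1) (fun n hn => (hbnds n hn).2)
  refine ⟨conj1, conj2, ?_⟩
  -- the region inclusion
  intro E hE
  rcases hE with hE | hE
  · -- fixed-length (RFL) part
    obtain ⟨lam0, hlam0, hEa, hEb⟩ := hE
    intro δ hδ
    refine ⟨1, fun n hn => ?_⟩
    have hnK : n ≤ K * n := Nat.le_mul_of_pos_left n (by omega)
    refine ⟨fixedTest P1 P2 (bb P1 P2 lam0) n hnK, ?_, ?_, ?_, ?_⟩
    · rw [fixed_late]
      exact (Real.exp_pos _).le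
    · rw [fixed_late]
      exact (Real.exp_pos _).le
    · refine (fixed_err1 h1 hs1 hs2 hnK hlam0).trans (Real.exp_le_exp.mpr ?_)
      have hn0 : (0:ℝ) ≤ n := Nat.cast_nonneg n
      have : E.1 - δ ≤ klDiv (tilted P1 P2 lam0) P1 := by linarith [hEa]
      nlinarith
    · refine (fixed_err2 h2 hs1 hs2 hnK hlam0).trans (Real.exp_le_exp.mpr ?_)
      have hn0 : (0:ℝ) ≤ n := Nat.cast_nonneg n
      have : E.2 - δ ≤ klDiv (tilted P1 P2 lam0) P2 := by linarith [hEb]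
      nlinarith
  · -- rectangle part
    rw [Set.mem_prod] at hE
    have hE1le : E.1 ≤ E1exp P1 P2 γ := hE.1.2
    have hE2le : E.2 ≤ E2exp P1 P2 γ := hE.2.2
    intro δ hδ
    refine ⟨max 1 ⌈Real.log 2 / δ⌉₊, fun n hn => ?_⟩
    have hn1 : 1 ≤ n := le_trans (le_max_left _ _) hn
    have hn0 : (0:ℝ) ≤ n := Nat.cast_nonneg n
    have hnd : Real.log 2 ≤ δ * n := by
      have hnn : (⌈Real.log 2 / δ⌉₊ : ℝ) ≤ (n : ℝ) := by
        exact_mod_cast le_trans (le_max_right _ _) hn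
      have hceil : Real.log 2 / δ ≤ (⌈Real.log 2 / δ⌉₊ : ℝ) := Nat.le_ceil _
      have : Real.log 2 / δ ≤ (n : ℝ) := hceil.trans hnn
      rw [div_le_iff₀ hδ] at this
      linarith
    refine ⟨twoPhaseTest P1 P2 α1 β1 0 K n hK, ?_, ?_, ?_, ?_⟩
    · refine (late1_le h1 h2 hs1 hs2 hK hlam2 (β1 := β1) hαb).trans (Real.exp_le_exp.mpr ?_)
      nlinarith [hlam2feas]
    · refine (late2_le h1 h2 hs1 hs2 hK hlam1 (α1 := α1) hβb).trans (Real.exp_le_exp.mpr ?_)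
      nlinarith [hlam1feas]
    · refine (up1 n hn1).trans ?_
      rw [show (2:ℝ) * Real.exp (-((n:ℝ) * E1)) = Real.exp (Real.log 2 + -((n:ℝ) * E1)) by
        rw [Real.exp_add, Real.exp_log two_pos]]
      apply Real.exp_le_exp.mpr
      have hE1' : E.1 ≤ E1 := by rw [hlam1max]; exact hE1le
      nlinarith
    · refine (up2 n hn1).trans ?_
      rw [show (2:ℝ) * Real.exp (-((n:ℝ) * E2)) = Real.exp (Real.log 2 + -((n:ℝ) * E2)) by
        rw [Real.exp_add, Real.exp_log two_pos]]
      apply Real.exp_le_exp.mpr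
      have hE2' : E.2 ≤ E2 := by rw [hlam2max]; exact hE2le
      nlinarith

end
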